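/- Let D = dℓ² be a discriminant, with d a fundamental discriminant and ℓ ∈ ℤ_{>0}, and let χ_d be the real primitive Dirichlet character of modulus |d| given by the Kronecker symbol (d | ·). Then for all complex s with Re(s) > 1, Σ_{m≥1} ψ_D(m) m^{−s} = L(s, χ_d) · ∏_{p | ℓ} (1 + (1 − χ_d(p)) Σ_{j=1}^{ord_p(ℓ)} p^{−js}), where L(s, χ_d) is the Dirichlet L-function of χ_d and ord_p(ℓ) is the p-adic valuation of ℓ. -/

import Mathlib

open scoped BigOperators Real

/-- An integer is a *discriminant* if it is congruent to 0 or 1 mod 4. -/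
def IsDiscriminant (D : ℤ) : Prop := D % 4 = 0 ∨ D % 4 = 1

/-- A *fundamental discriminant* (including `1`, for positive square discriminants). -/
def IsFundamentalDiscriminant (d : ℤ) : Prop :=
  (Squarefree d ∧ d % 4 = 1) ∨
    (∃ m : ℤ, d = 4 * m ∧ Squarefree m ∧ (m % 4 = 2 ∨ m % 4 = 3))

/-- The Kronecker symbol `(d | m)` for `m > 0`, defined by complete multiplicativity in `m`
from the Jacobi symbol on the odd part and the standard value at `2`. -/
noncomputable def kron (d : ℤ) (m : ℕ) : ℤ :=
  (if d % 2 = 0 then 0 else if d % 8 = 1 ∨ d % 8 = 7 then 1 else -1) ^ (m.factorization 2) *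
    jacobiSym d (m / 2 ^ (m.factorization 2))

-- `ψ_D(m) = (d | m / gcd(m, ℓ))` where `D = d ℓ²` with `d` a fundamental discriminant,
-- with the convention `ψ_0(m) = 1`.
open Classical in
noncomputable def psi (D : ℤ) (m : ℕ) : ℤ :=
  if D = 0 then 1
  else if h : ∃ p : ℤ × ℕ, IsFundamentalDiscriminant p.1 ∧ D = p.1 * (p.2 : ℤ) ^ 2 then
    kron h.choose.1 (m / m.gcd h.choose.2)
  else 0

/-- `ψ̄_t(m) = φ(m²)⁻¹ ∑_{n mod m², (n,m)=1} ψ_{t²-4n}(m)`. -/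
noncomputable def psibar (t : ℤ) (m : ℕ) : ℝ :=
  (Nat.totient (m ^ 2) : ℝ)⁻¹ *
    ∑ n ∈ Finset.range (m ^ 2), if Nat.gcd n m = 1 then (psi (t ^ 2 - 4 * n) m : ℝ) else 0

/-- `L(1, ψ_D) = ∑_{m ≥ 1} ψ_D(m)/m`, as the limit of the partial sums
(the series is in general only conditionally convergent). -/
noncomputable def LpsiOne (D : ℤ) : ℝ :=
  Filter.limUnder Filter.atTop (fun X : ℕ => ∑ m ∈ Finset.Icc 1 X, (psi D m : ℝ) / m)

/-- `L(1, ψ̄_t) = ∑_{m ≥ 1} ψ̄_t(m)/m`. -/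
noncomputable def LpsibarOne (t : ℤ) : ℝ := ∑' m : ℕ, psibar t (m + 1) / (m + 1)

lemma kron_one (d : ℤ) : kron d 1 = 1 := by
  simp [kron]

lemma kron_mul (d : ℤ) {m n : ℕ} (hm : m ≠ 0) (hn : n ≠ 0) :
    kron d (m * n) = kron d m * kron d n := by
  unfold kron
  rw [show (m * n) / 2 ^ ((m * n).factorization 2)
      = (m / 2 ^ (m.factorization 2)) * (n / 2 ^ (n.factorization 2)) from
    Nat.ordCompl_mul m n 2]
  rw [jacobiSym.mul_right' d (Nat.ordCompl_pos 2 hm).ne' (Nat.ordCompl_pos 2 hn).ne']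
  rw [Nat.factorization_mul hm hn, Finsupp.add_apply, pow_add]
  ring

lemma kron_pow (d : ℤ) (p : ℕ) (hp : p ≠ 0) (k : ℕ) : kron d (p ^ k) = (kron d p) ^ k := by
  induction k with
  | zero => simpa using kron_one d
  | succ k ih => rw [pow_succ, kron_mul d (pow_ne_zero _ hp) hp, ih, pow_succ]

lemma kron_abs_le (d : ℤ) (m : ℕ) : |kron d m| ≤ 1 := by
  unfold kron
  rw [abs_mul, abs_pow]
  have h1 : |if d % 2 = 0 then (0:ℤ) else if d % 8 = 1 ∨ d % 8 = 7 then 1 else -1| ≤ 1 := by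
    split_ifs <;> simp
  have h2 : |jacobiSym d (m / 2 ^ (m.factorization 2))| ≤ 1 := by
    rcases jacobiSym.trichotomy d (m / 2 ^ (m.factorization 2)) with h | h | h <;> simp [h]
  calc |(if d % 2 = 0 then (0:ℤ) else if d % 8 = 1 ∨ d % 8 = 7 then 1 else -1)| ^ m.factorization 2
        * |jacobiSym d (m / 2 ^ (m.factorization 2))|
      ≤ 1 ^ m.factorization 2 * 1 := by
        exact mul_le_mul (pow_le_pow_left₀ (abs_nonneg _) h1 _) h2 (abs_nonneg _) (by positivity)
    _ = 1 := by simp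

lemma fund_ne_zero {d : ℤ} (hd : IsFundamentalDiscriminant d) : d ≠ 0 := by
  rcases hd with ⟨hsq, _⟩ | ⟨m, rfl, hsq, _⟩
  · exact hsq.ne_zero
  · exact mul_ne_zero (by norm_num) hsq.ne_zero

lemma fund_sq_dvd {d : ℤ} (hd : IsFundamentalDiscriminant d) {a : ℕ}
    (h : (a : ℤ) ^ 2 ∣ d) : a ∣ 2 := by
  have haux : ∀ b : ℕ, IsUnit (b : ℤ) → b = 1 := by
    intro b hb
    rcases Int.isUnit_iff.mp hb with h1 | h1
    · exact_mod_cast h1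
    · omega
  rcases hd with ⟨hsq, _⟩ | ⟨m, rfl, hsq, _⟩
  · have := hsq (a : ℤ) (by rwa [← sq])
    rw [haux a this]; exact one_dvd 2
  · rcases Nat.even_or_odd a with he | ho
    · obtain ⟨b, rfl⟩ := he
      have hb : (b : ℤ) * b ∣ m := by
        have h4 : (4 : ℤ) * (b * b) ∣ 4 * m := by
          have : ((b + b : ℕ) : ℤ) ^ 2 = 4 * ((b : ℤ) * b) := by push_cast; ring
          rwa [this] at h
        exact (mul_dvd_mul_iff_left (by norm_num : (4:ℤ) ≠ 0)).mp h4
      have := haux b (hsq (b : ℤ) hb)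
      subst this; exact dvd_refl 2
    · have hcop : IsCoprime ((a : ℤ) ^ 2) 4 := by
        have hcopn : Nat.Coprime a 2 :=
          (Nat.prime_two.coprime_iff_not_dvd.mpr (by
            rw [Nat.odd_iff] at ho; omega)).symm
        have h2 : IsCoprime (a : ℤ) ((2 : ℕ) : ℤ) := by
          rw [Int.isCoprime_iff_gcd_eq_one, Int.gcd_natCast_natCast]
          exact hcopn
        have : IsCoprime (a : ℤ) 4 := by
          have := h2.pow_right (n := 2); norm_num at this; exact this
        exact this.pow_left
      have ham : (a : ℤ) ^ 2 ∣ m := hcop.dvd_of_dvd_mul_left h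
      have := hsq (a : ℤ) (by rwa [← sq])
      rw [haux a this]; exact one_dvd 2

lemma fund_not_four_mul {d : ℤ} (hd : IsFundamentalDiscriminant d) :
    ¬ IsFundamentalDiscriminant (4 * d) := by
  rintro (⟨hsq, _⟩ | ⟨m, hm, hsq, hmod⟩)
  · have := Int.isUnit_iff.mp (hsq 2 ⟨d, by ring⟩)
    omega
  · have hdm : d = m := by omega
    subst hdm
    rcases hd with ⟨_, h1⟩ | ⟨m₂, rfl, _, _⟩
    · omega
    · have := Int.isUnit_iff.mp (hsq 2 ⟨m₂, by ring⟩)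
      omega

lemma fund_unique {d₁ d₂ : ℤ} {l₁ l₂ : ℕ} (h₁ : IsFundamentalDiscriminant d₁)
    (h₂ : IsFundamentalDiscriminant d₂) (hl₁ : l₁ ≠ 0) (hl₂ : l₂ ≠ 0)
    (heq : d₁ * (l₁ : ℤ) ^ 2 = d₂ * (l₂ : ℤ) ^ 2) : d₁ = d₂ ∧ l₁ = l₂ := by
  have main : d₁ = d₂ := by
    set g := Nat.gcd l₁ l₂ with hg
    have hgpos : 0 < g := Nat.gcd_pos_of_pos_left _ (Nat.pos_of_ne_zero hl₁)
    obtain ⟨a₁, hl₁'⟩ : g ∣ l₁ := Nat.gcd_dvd_left l₁ l₂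
    obtain ⟨a₂, hl₂'⟩ : g ∣ l₂ := Nat.gcd_dvd_right l₁ l₂
    have hcop : Nat.Coprime a₁ a₂ := by
      have h := Nat.coprime_div_gcd_div_gcd (m := l₁) (n := l₂) hgpos
      rw [← hg] at h
      rwa [hl₁', hl₂', Nat.mul_div_cancel_left _ hgpos, Nat.mul_div_cancel_left _ hgpos] at h
    have key : d₁ * (a₁ : ℤ) ^ 2 = d₂ * (a₂ : ℤ) ^ 2 := by
      have h : ((g : ℤ)) ^ 2 * (d₁ * (a₁ : ℤ) ^ 2)
          = ((g : ℤ)) ^ 2 * (d₂ * (a₂ : ℤ) ^ 2) := by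
        rw [hl₁', hl₂'] at heq; push_cast at heq ⊢; linear_combination heq
      exact mul_left_cancel₀ (pow_ne_zero _ (Int.natCast_ne_zero.mpr hgpos.ne')) h
    have hicop : IsCoprime (a₁ : ℤ) (a₂ : ℤ) := Int.isCoprime_iff_gcd_eq_one.mpr hcop
    have hdvd2 : (a₁ : ℤ) ^ 2 ∣ d₂ * (a₂ : ℤ) ^ 2 := ⟨d₁, by linear_combination -key⟩
    have hdvd1 : (a₂ : ℤ) ^ 2 ∣ d₁ * (a₁ : ℤ) ^ 2 := ⟨d₂, by linear_combination key⟩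
    have hd2 : (a₁ : ℤ) ^ 2 ∣ d₂ := (hicop.pow).dvd_of_dvd_mul_right hdvd2
    have hd1 : (a₂ : ℤ) ^ 2 ∣ d₁ := (hicop.symm.pow).dvd_of_dvd_mul_right hdvd1
    have ha1 : a₁ = 1 ∨ a₁ = 2 := (Nat.prime_two).eq_one_or_self_of_dvd a₁ (fund_sq_dvd h₂ hd2)
    have ha2 : a₂ = 1 ∨ a₂ = 2 := (Nat.prime_two).eq_one_or_self_of_dvd a₂ (fund_sq_dvd h₁ hd1)
    rcases ha1 with rfl | rfl <;> rcases ha2 with rfl | rfl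
    · simpa using key
    · exfalso
      have hk : d₁ = 4 * d₂ := by push_cast at key; linarith
      rw [hk] at h₁
      exact fund_not_four_mul h₂ h₁
    · exfalso
      have hk : d₂ = 4 * d₁ := by push_cast at key; linarith
      rw [hk] at h₂
      exact fund_not_four_mul h₁ h₂
    · exact absurd hcop (by norm_num [Nat.Coprime])
  refine ⟨main, ?_⟩
  subst main
  have : (l₁ : ℤ) ^ 2 = (l₂ : ℤ) ^ 2 :=
    mul_left_cancel₀ (fund_ne_zero h₁) heq
  have : l₁ ^ 2 = l₂ ^ 2 := by exact_mod_cast this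
  exact Nat.pow_left_injective (by norm_num) this

lemma psi_eq {d : ℤ} {l : ℕ} (hd : IsFundamentalDiscriminant d) (hl : l ≠ 0) (m : ℕ) :
    psi (d * (l : ℤ) ^ 2) m = kron d (m / m.gcd l) := by
  have hD : d * (l : ℤ) ^ 2 ≠ 0 :=
    mul_ne_zero (fund_ne_zero hd) (pow_ne_zero _ (Int.natCast_ne_zero.mpr hl))
  have hex : ∃ p : ℤ × ℕ, IsFundamentalDiscriminant p.1 ∧ d * (l : ℤ) ^ 2 = p.1 * (p.2 : ℤ) ^ 2 :=
    ⟨(d, l), hd, rfl⟩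
  rw [psi, if_neg hD, dif_pos hex]
  obtain ⟨h1, h2⟩ := hex.choose_spec
  have hl' : hex.choose.2 ≠ 0 := by
    intro h0
    rw [h0] at h2
    push_cast at h2
    simp at h2
    rcases h2 with h | h
    · exact fund_ne_zero hd h
    · exact hl h
  obtain ⟨hdd, hll⟩ := fund_unique h1 hd hl' hl h2.symm
  rw [hdd, hll]

open ArithmeticFunction in
noncomputable def chiA (d : ℤ) : ArithmeticFunction ℂ :=
  ⟨fun n => if n = 0 then 0 else (kron d n : ℂ), rfl⟩

noncomputable def gA (d : ℤ) (l : ℕ) : ArithmeticFunction ℂ :=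
  ⟨fun n => if n = 0 then 0 else if n ∣ l then ∏ p ∈ n.primeFactors, (1 - (kron d p : ℂ))
    else 0, rfl⟩

noncomputable def fA (d : ℤ) (l : ℕ) : ArithmeticFunction ℂ :=
  ⟨fun n => if n = 0 then 0 else (kron d (n / n.gcd l) : ℂ), rfl⟩

noncomputable def powA (s : ℂ) : ArithmeticFunction ℂ :=
  ⟨fun n => if n = 0 then 0 else (n : ℂ) ^ (-s), rfl⟩

lemma chiA_apply (d : ℤ) (n : ℕ) : chiA d n = if n = 0 then 0 else (kron d n : ℂ) := rfl
lemma gA_apply (d : ℤ) (l n : ℕ) :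
    gA d l n = if n = 0 then 0 else if n ∣ l then ∏ p ∈ n.primeFactors, (1 - (kron d p : ℂ))
      else 0 := rfl
lemma fA_apply (d : ℤ) (l n : ℕ) :
    fA d l n = if n = 0 then 0 else (kron d (n / n.gcd l) : ℂ) := rfl
lemma powA_apply (s : ℂ) (n : ℕ) : powA s n = if n = 0 then 0 else (n : ℂ) ^ (-s) := rfl

lemma isMult_chiA (d : ℤ) : (chiA d).IsMultiplicative := by
  constructor
  · simp [chiA_apply, kron_one]
  · intro m n hmn
    rcases eq_or_ne m 0 with rfl | hm
    · rw [Nat.coprime_zero_left] at hmn; subst hmn; simp [chiA_apply]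
    rcases eq_or_ne n 0 with rfl | hn
    · rw [Nat.coprime_zero_right] at hmn; subst hmn; simp [chiA_apply]
    simp only [chiA_apply, if_neg hm, if_neg hn, if_neg (mul_ne_zero hm hn)]
    rw [kron_mul d hm hn]; push_cast; ring

lemma isMult_gA (d : ℤ) (l : ℕ) : (gA d l).IsMultiplicative := by
  constructor
  · simp [gA_apply]
  · intro m n hmn
    rcases eq_or_ne m 0 with rfl | hm
    · rw [Nat.coprime_zero_left] at hmn; subst hmn; simp [gA_apply]
    rcases eq_or_ne n 0 with rfl | hn
    · rw [Nat.coprime_zero_right] at hmn; subst hmn; simp [gA_apply]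
    simp only [gA_apply, if_neg hm, if_neg hn, if_neg (mul_ne_zero hm hn)]
    by_cases hml : m ∣ l
    · by_cases hnl : n ∣ l
      · rw [if_pos (Nat.Coprime.mul_dvd_of_dvd_of_dvd hmn hml hnl), if_pos hml, if_pos hnl,
          Nat.primeFactors_mul hm hn,
          Finset.prod_union (Nat.Coprime.disjoint_primeFactors hmn)]
      · rw [if_neg (fun h => hnl ((dvd_mul_left n m).trans h)), if_neg hnl, mul_zero]
    · rw [if_neg (fun h => hml ((dvd_mul_right m n).trans h)), if_neg hml, zero_mul]

lemma gcd_mul_coprime {m n : ℕ} (l : ℕ) (h : Nat.Coprime m n) :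
    Nat.gcd (m * n) l = Nat.gcd m l * Nat.gcd n l := by
  apply Nat.dvd_antisymm
  · obtain ⟨m', n', hm', hn', hG⟩ := exists_dvd_and_dvd_of_dvd_mul (Nat.gcd_dvd_left (m * n) l)
    have hGl : m' * n' ∣ l := hG ▸ Nat.gcd_dvd_right (m * n) l
    rw [hG]
    exact mul_dvd_mul (Nat.dvd_gcd hm' ((dvd_mul_right m' n').trans hGl))
      (Nat.dvd_gcd hn' ((dvd_mul_left n' m').trans hGl))
  · have c : Nat.Coprime (Nat.gcd m l) (Nat.gcd n l) :=
      Nat.Coprime.coprime_dvd_left (Nat.gcd_dvd_left m l)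
        (Nat.Coprime.coprime_dvd_right (Nat.gcd_dvd_left n l) h)
    exact Nat.dvd_gcd (mul_dvd_mul (Nat.gcd_dvd_left m l) (Nat.gcd_dvd_left n l))
      (c.mul_dvd_of_dvd_of_dvd (Nat.gcd_dvd_right m l) (Nat.gcd_dvd_right n l))

lemma div_gcd_ne_zero {m : ℕ} (hm : m ≠ 0) (l : ℕ) : m / Nat.gcd m l ≠ 0 := by
  have h1 : 0 < Nat.gcd m l := Nat.gcd_pos_of_pos_left _ (Nat.pos_of_ne_zero hm)
  exact (Nat.div_pos (Nat.le_of_dvd (Nat.pos_of_ne_zero hm) (Nat.gcd_dvd_left m l)) h1).ne'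

lemma isMult_fA (d : ℤ) (l : ℕ) : (fA d l).IsMultiplicative := by
  constructor
  · simp [fA_apply, kron_one]
  · intro m n hmn
    rcases eq_or_ne m 0 with rfl | hm
    · rw [Nat.coprime_zero_left] at hmn; subst hmn; simp [fA_apply]
    rcases eq_or_ne n 0 with rfl | hn
    · rw [Nat.coprime_zero_right] at hmn; subst hmn; simp [fA_apply]
    simp only [fA_apply, if_neg hm, if_neg hn, if_neg (mul_ne_zero hm hn)]
    rw [show (m * n) / Nat.gcd (m * n) l = (m / Nat.gcd m l) * (n / Nat.gcd n l) by
      rw [gcd_mul_coprime l hmn,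
        ← Nat.div_mul_div_comm (Nat.gcd_dvd_left m l) (Nat.gcd_dvd_left n l)],
      kron_mul d (div_gcd_ne_zero hm l) (div_gcd_ne_zero hn l)]
    push_cast; ring

lemma isMult_powA (s : ℂ) : (powA s).IsMultiplicative := by
  constructor
  · simp [powA_apply, Complex.one_cpow]
  · intro m n hmn
    rcases eq_or_ne m 0 with rfl | hm
    · rw [Nat.coprime_zero_left] at hmn; subst hmn; simp [powA_apply, Complex.one_cpow]
    rcases eq_or_ne n 0 with rfl | hn
    · rw [Nat.coprime_zero_right] at hmn; subst hmn; simp [powA_apply, Complex.one_cpow]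
    simp only [powA_apply, if_neg hm, if_neg hn, if_neg (mul_ne_zero hm hn)]
    have h := Complex.mul_cpow_ofReal_nonneg (Nat.cast_nonneg m) (Nat.cast_nonneg n) (-s)
    push_cast at h ⊢
    exact h

lemma gcd_prime_pow {p : ℕ} (hp : p.Prime) (k : ℕ) {l : ℕ} (hl : l ≠ 0) :
    Nat.gcd (p ^ k) l = p ^ (min k (l.factorization p)) := by
  obtain ⟨j, hjk, hj⟩ := (Nat.dvd_prime_pow hp).mp (Nat.gcd_dvd_left (p ^ k) l)
  have hjl : j ≤ l.factorization p :=
    (Nat.Prime.pow_dvd_iff_le_factorization hp hl).mp (hj ▸ Nat.gcd_dvd_right (p ^ k) l)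
  have h1 : p ^ (min k (l.factorization p)) ∣ Nat.gcd (p ^ k) l :=
    Nat.dvd_gcd (pow_dvd_pow p (min_le_left _ _))
      ((Nat.Prime.pow_dvd_iff_le_factorization hp hl).mpr (min_le_right _ _))
  rw [hj] at h1 ⊢
  have h2 := (Nat.pow_dvd_pow_iff_le_right hp.one_lt).mp h1
  rw [le_antisymm (le_min hjk hjl) h2]

lemma tele (c : ℂ) {t k : ℕ} (h : t ≤ k) :
    ∑ j ∈ Finset.Icc 1 t, c ^ (k - j) * (1 - c) = c ^ (k - t) - c ^ k := by
  induction t with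
  | zero => simp
  | succ t ih =>
    rw [Finset.sum_Icc_succ_top (by omega), ih (by omega)]
    rw [show k - t = (k - (t + 1)) + 1 by omega, pow_succ]
    ring

lemma range_succ_eq_insert_Icc (k : ℕ) :
    Finset.range (k + 1) = insert 0 (Finset.Icc 1 k) := by
  ext j; simp [Finset.mem_range, Finset.mem_Icc]; omega

lemma sum_loc (c : ℂ) (k v : ℕ) :
    ∑ j ∈ Finset.range (k + 1),
      c ^ (k - j) * (if j = 0 then 1 else if j ≤ v then 1 - c else 0)
      = c ^ (k - min k v) := by
  rw [range_succ_eq_insert_Icc, Finset.sum_insert (by simp)]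
  have h1 : ∑ j ∈ Finset.Icc 1 k,
      c ^ (k - j) * (if j = 0 then (1:ℂ) else if j ≤ v then 1 - c else 0)
      = ∑ j ∈ Finset.Icc 1 (min k v), c ^ (k - j) * (1 - c) := by
    rw [← Finset.sum_subset (Finset.Icc_subset_Icc_right (min_le_left k v))
      (fun x hx hnx => ?_)]
    · refine Finset.sum_congr rfl fun j hj => ?_
      rw [Finset.mem_Icc] at hj
      rw [if_neg (by omega), if_pos (le_trans hj.2 (min_le_right k v))]
    · rw [Finset.mem_Icc] at hx
      rw [Finset.mem_Icc] at hnx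
      rw [if_neg (by omega), if_neg (by omega), mul_zero]
  rw [h1, tele c (min_le_left k v)]
  simp

lemma conv_eq_fA (d : ℤ) {l : ℕ} (hl : l ≠ 0) : chiA d * gA d l = fA d l := by
  rw [ArithmeticFunction.IsMultiplicative.eq_iff_eq_on_prime_powers _
    ((isMult_chiA d).mul (isMult_gA d l)) _ (isMult_fA d l)]
  intro p k hp
  have hp0 : p ≠ 0 := hp.pos.ne'
  have hpk : ∀ j : ℕ, p ^ j ≠ 0 := fun j => pow_ne_zero j hp0
  rw [ArithmeticFunction.mul_apply, Nat.sum_divisorsAntidiagonal' (f := fun a b => chiA d a * gA d l b),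
    Nat.sum_divisors_prime_pow hp]
  have hstep : ∀ j ∈ Finset.range (k + 1),
      chiA d (p ^ k / p ^ j) * gA d l (p ^ j)
      = ((kron d p : ℂ)) ^ (k - j) *
        (if j = 0 then 1 else if j ≤ l.factorization p then 1 - (kron d p : ℂ) else 0) := by
    intro j hj
    rw [Finset.mem_range] at hj
    have hchi : chiA d (p ^ k / p ^ j) = ((kron d p : ℂ)) ^ (k - j) := by
      rw [Nat.pow_div (by omega) hp.pos, chiA_apply, if_neg (hpk _), kron_pow d p hp0]
      push_cast; ring
    rw [hchi, gA_apply, if_neg (hpk j)]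
    rcases eq_or_ne j 0 with rfl | hj0
    · simp
    · have hpf : (p ^ j).primeFactors = {p} := Nat.primeFactors_prime_pow hj0 hp
      by_cases hdv : p ^ j ∣ l
      · rw [if_pos hdv, if_neg hj0,
          if_pos ((Nat.Prime.pow_dvd_iff_le_factorization hp hl).mp hdv), hpf,
          Finset.prod_singleton]
      · rw [if_neg hdv, if_neg hj0,
          if_neg (fun hle => hdv ((Nat.Prime.pow_dvd_iff_le_factorization hp hl).mpr hle))]
  rw [Finset.sum_congr rfl hstep, sum_loc, fA_apply, if_neg (hpk k),
    gcd_prime_pow hp k hl, Nat.pow_div (min_le_left _ _) hp.pos,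
    kron_pow d p hp0]
  push_cast
  ring

lemma H_eq_prod (d : ℤ) {l : ℕ} (hl : l ≠ 0) (s : ℂ) :
    ∑ n ∈ l.divisors, (gA d l n * (n : ℂ) ^ (-s))
      = ∏ p ∈ l.primeFactors,
        (1 + (1 - (kron d p : ℂ)) *
          ∑ j ∈ Finset.Icc 1 (l.factorization p), ((p : ℕ) : ℂ) ^ (-(j : ℂ) * s)) := by
  have hGmult : ((gA d l).pmul (powA s)).IsMultiplicative :=
    (isMult_gA d l).pmul (isMult_powA s)
  have hHmult : ((gA d l).pmul (powA s) * ↑ArithmeticFunction.zeta).IsMultiplicative :=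
    hGmult.mul ArithmeticFunction.isMultiplicative_zeta.natCast
  have h1 : ((gA d l).pmul (powA s) * ↑ArithmeticFunction.zeta) l
      = ∑ n ∈ l.divisors, (gA d l n * (n : ℂ) ^ (-s)) := by
    rw [ArithmeticFunction.coe_mul_zeta_apply]
    refine Finset.sum_congr rfl fun n hn => ?_
    rw [ArithmeticFunction.pmul_apply, powA_apply,
      if_neg (Nat.pos_of_mem_divisors hn).ne']
  rw [← h1, hHmult.multiplicative_factorization _ hl, Finsupp.prod, Nat.support_factorization]
  refine Finset.prod_congr rfl fun p hp => ?_
  have hpp : p.Prime := Nat.prime_of_mem_primeFactors hp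
  have hkpos : 1 ≤ l.factorization p := (Nat.Prime.factorization_pos_of_dvd hpp hl
    (Nat.dvd_of_mem_primeFactors hp))
  rw [ArithmeticFunction.coe_mul_zeta_apply, Nat.sum_divisors_prime_pow hpp,
    range_succ_eq_insert_Icc, Finset.sum_insert (by simp)]
  have h0 : ((gA d l).pmul (powA s)) (p ^ 0) = 1 := by
    rw [pow_zero]; exact hGmult.map_one
  have hterm : ∀ j ∈ Finset.Icc 1 (l.factorization p),
      ((gA d l).pmul (powA s)) (p ^ j)
        = (1 - (kron d p : ℂ)) * ((p : ℕ) : ℂ) ^ (-(j : ℂ) * s) := by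
    intro j hj
    rw [Finset.mem_Icc] at hj
    have hj0 : j ≠ 0 := by omega
    have hpj : (p : ℕ) ^ j ≠ 0 := pow_ne_zero _ hpp.pos.ne'
    rw [ArithmeticFunction.pmul_apply, gA_apply, if_neg hpj,
      if_pos ((Nat.Prime.pow_dvd_iff_le_factorization hpp hl).mpr hj.2),
      Nat.primeFactors_prime_pow hj0 hpp, Finset.prod_singleton, powA_apply, if_neg hpj]
    congr 1
    rw [show (-(j : ℂ) * s) = (j : ℕ) * (-s) by push_cast; ring,
      Complex.natCast_cpow_natCast_mul]
    norm_cast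
  rw [Finset.sum_congr rfl hterm, h0, ← Finset.mul_sum]

lemma term_succ (F : ℕ → ℂ) (s : ℂ) (m : ℕ) :
    LSeries.term F s (m + 1) = F (m + 1) * ((m + 1 : ℕ) : ℂ) ^ (-s) := by
  rw [LSeries.term_of_ne_zero (Nat.succ_ne_zero m), Complex.cpow_neg, div_eq_mul_inv]


/-- For a discriminant `D = dℓ²` (`d` fundamental, `ℓ > 0`) and `Re(s) > 1`,
`Σ_{m≥1} ψ_D(m) m^{-s} = L(s, χ_d) ∏_{p ∣ ℓ} (1 + (1 - χ_d(p)) Σ_{j=1}^{ord_p(ℓ)} p^{-js})`,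
where `χ_d = (d | ·)` is the Kronecker symbol and `L(s, χ_d)` is its Dirichlet series
(which is the Dirichlet `L`-function of `χ_d` in this region). -/
theorem Lseries_psi_factorization (d : ℤ) (ℓ : ℕ)
    (hd : IsFundamentalDiscriminant d) (hℓ : 0 < ℓ) (s : ℂ) (hs : 1 < s.re) :
    Summable (fun m : ℕ => ‖(psi (d * (ℓ : ℤ) ^ 2) (m + 1) : ℂ) * ((m + 1 : ℕ) : ℂ) ^ (-s)‖) ∧
    (∑' m : ℕ, (psi (d * (ℓ : ℤ) ^ 2) (m + 1) : ℂ) * ((m + 1 : ℕ) : ℂ) ^ (-s)) =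
      (∑' n : ℕ, (kron d (n + 1) : ℂ) * ((n + 1 : ℕ) : ℂ) ^ (-s)) *
        ∏ p ∈ ℓ.primeFactors,
          (1 + (1 - (kron d p : ℂ)) *
            ∑ j ∈ Finset.Icc 1 (ℓ.factorization p), ((p : ℕ) : ℂ) ^ (-(j : ℂ) * s)) := by
  have hl0 : ℓ ≠ 0 := hℓ.ne'
  have hpsi : ∀ m : ℕ, (psi (d * (ℓ : ℤ) ^ 2) (m + 1) : ℂ) = fA d ℓ (m + 1) := by
    intro m
    rw [psi_eq hd hl0 (m + 1), fA_apply, if_neg (Nat.succ_ne_zero m)]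
  -- summability of the majorant
  have hmaj : Summable (fun m : ℕ => ((m + 1 : ℕ) : ℝ) ^ (-s.re)) := by
    have h1 : Summable (fun n : ℕ => (n : ℝ) ^ (-s.re)) :=
      Real.summable_nat_rpow.mpr (by linarith)
    exact (summable_nat_add_iff 1).mpr h1
  have hbound : ∀ m : ℕ,
      ‖(psi (d * (ℓ : ℤ) ^ 2) (m + 1) : ℂ) * ((m + 1 : ℕ) : ℂ) ^ (-s)‖
        ≤ ((m + 1 : ℕ) : ℝ) ^ (-s.re) := by
    intro m
    rw [norm_mul, Complex.norm_natCast_cpow_of_pos (Nat.succ_pos m), Complex.neg_re]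
    have h2 : ‖((psi (d * (ℓ : ℤ) ^ 2) (m + 1) : ℤ) : ℂ)‖ ≤ 1 := by
      rw [psi_eq hd hl0 (m + 1)]
      rw [Complex.norm_intCast]
      exact_mod_cast kron_abs_le d ((m + 1) / (m + 1).gcd ℓ)
    calc ‖((psi (d * (ℓ : ℤ) ^ 2) (m + 1) : ℤ) : ℂ)‖ * ((m + 1 : ℕ) : ℝ) ^ (-s.re)
        ≤ 1 * ((m + 1 : ℕ) : ℝ) ^ (-s.re) := by
          exact mul_le_mul_of_nonneg_right h2 (Real.rpow_nonneg (Nat.cast_nonneg _) _)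
      _ = ((m + 1 : ℕ) : ℝ) ^ (-s.re) := one_mul _
  have hsummable : Summable
      (fun m : ℕ => ‖(psi (d * (ℓ : ℤ) ^ 2) (m + 1) : ℂ) * ((m + 1 : ℕ) : ℂ) ^ (-s)‖) :=
    Summable.of_nonneg_of_le (fun m => norm_nonneg _) hbound hmaj
  refine ⟨hsummable, ?_⟩
  -- summability of the L-series
  have hχsum : LSeriesSummable (⇑(chiA d)) s := by
    apply LSeriesSummable_of_bounded_of_one_lt_re (m := 1) _ hs
    intro n hn
    rw [chiA_apply, if_neg hn, Complex.norm_intCast]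
    exact_mod_cast kron_abs_le d n
  have hgsum : LSeriesSummable (⇑(gA d ℓ)) s := by
    apply summable_of_ne_finset_zero (s := ℓ.divisors)
    intro n hn
    rcases eq_or_ne n 0 with rfl | hn0
    · exact LSeries.term_zero _ _
    · rw [LSeries.term_of_ne_zero hn0, gA_apply, if_neg hn0,
        if_neg (fun h => hn (Nat.mem_divisors.mpr ⟨h, hl0⟩)), zero_div]
  have hfsum : LSeriesSummable (⇑(fA d ℓ)) s := by
    rw [← conv_eq_fA d hl0]
    exact ArithmeticFunction.LSeriesSummable_mul hχsum hgsum
  -- identify the tsums with L-series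
  have hshift : ∀ (F : ℕ → ℂ), LSeriesSummable F s →
      LSeries F s = ∑' m : ℕ, F (m + 1) * ((m + 1 : ℕ) : ℂ) ^ (-s) := by
    intro F hF
    rw [LSeries, Summable.tsum_eq_zero_add hF, LSeries.term_zero, zero_add]
    exact tsum_congr fun m => term_succ F s m
  have hLHS : (∑' m : ℕ, (psi (d * (ℓ : ℤ) ^ 2) (m + 1) : ℂ) * ((m + 1 : ℕ) : ℂ) ^ (-s))
      = LSeries (⇑(fA d ℓ)) s := by
    rw [hshift _ hfsum]
    exact tsum_congr fun m => by rw [hpsi m]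
  have hchi : (∑' n : ℕ, (kron d (n + 1) : ℂ) * ((n + 1 : ℕ) : ℂ) ^ (-s))
      = LSeries (⇑(chiA d)) s := by
    rw [hshift _ hχsum]
    exact tsum_congr fun n => by rw [chiA_apply, if_neg (Nat.succ_ne_zero n)]
  have hg : LSeries (⇑(gA d ℓ)) s
      = ∑ n ∈ ℓ.divisors, (gA d ℓ n * (n : ℂ) ^ (-s)) := by
    rw [LSeries]
    rw [tsum_eq_sum (s := ℓ.divisors) (fun n hn => ?_)]
    · refine Finset.sum_congr rfl fun n hn => ?_
      rw [LSeries.term_of_ne_zero (Nat.pos_of_mem_divisors hn).ne',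
        Complex.cpow_neg, div_eq_mul_inv]
    · rcases eq_or_ne n 0 with rfl | hn0
      · exact LSeries.term_zero _ _
      · rw [LSeries.term_of_ne_zero hn0, gA_apply, if_neg hn0,
          if_neg (fun h => hn (Nat.mem_divisors.mpr ⟨h, hl0⟩)), zero_div]
  rw [hLHS, hchi, ← conv_eq_fA d hl0, ArithmeticFunction.LSeries_mul' hχsum hgsum, hg,
    H_eq_prod d hl0 s]
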